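/- Let $1 = \varepsilon_0 > \varepsilon_1 > \varepsilon_2 > \cdots$ be a strictly decreasing sequence of positive reals and let $K \in (1,2]$. Suppose that for every $m \geq 1$ we have $\sum_{j=1}^{m} \varepsilon_m/\varepsilon_j \leq K$. Then for all $1 \leq k \leq m$, $\varepsilon_m/\varepsilon_k \leq K (1 - K^{-1})^{m-k}$. -/

import Mathlib

/-- If `1 = ε₀ > ε₁ > ⋯` are positive, `K ∈ (1,2]`, and `∑_{j=1}^m ε_m/ε_j ≤ K`
for every `m ≥ 1`, then `ε_m/ε_k ≤ K (1 - K⁻¹)^(m-k)` for all `1 ≤ k ≤ m`. -/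
theorem stmt_0 (ε : ℕ → ℝ) (hpos : ∀ j, 0 < ε j) (hdec : StrictAnti ε)
    (hε0 : ε 0 = 1) (K : ℝ) (hK1 : 1 < K) (hK2 : K ≤ 2)
    (hsum : ∀ m : ℕ, 1 ≤ m → ∑ j ∈ Finset.Icc 1 m, ε m / ε j ≤ K) :
    ∀ k m : ℕ, 1 ≤ k → k ≤ m → ε m / ε k ≤ K * (1 - K⁻¹) ^ (m - k) := by
  intro k m hk hkm
  have hK0 : (0:ℝ) < K := by linarith
  have hr0 : (0:ℝ) < 1 - K⁻¹ := by
    have : K⁻¹ < 1 := by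
      rw [inv_lt_one_iff₀]; right; exact hK1
    linarith
  set a : ℕ → ℝ := fun n => ∑ j ∈ Finset.Icc 1 n, (ε j)⁻¹ with ha
  have hεa : ∀ n, 1 ≤ n → ε n * a n ≤ K := by
    intro n hn
    have h := hsum n hn
    calc ε n * a n = ∑ j ∈ Finset.Icc 1 n, ε n / ε j := by
          simp [ha, Finset.mul_sum, div_eq_mul_inv]
      _ ≤ K := h
  have hstep : ∀ n : ℕ, a n ≤ a (n+1) * (1 - K⁻¹) := by
    intro n
    have hsucc : a (n+1) = a n + (ε (n+1))⁻¹ := by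
      simp [ha, Finset.sum_Icc_succ_top (Nat.le_add_left 1 n)]
    have h1 := hεa (n+1) (Nat.le_add_left 1 n)
    have hε := hpos (n+1)
    have h2 : a (n+1) * K⁻¹ ≤ (ε (n+1))⁻¹ := by
      have h3 := mul_le_mul_of_nonneg_right h1
        (mul_pos (inv_pos.2 hε) (inv_pos.2 hK0)).le
      calc a (n+1) * K⁻¹
          = (ε (n+1) * a (n+1)) * ((ε (n+1))⁻¹ * K⁻¹) := by
            field_simp
        _ ≤ K * ((ε (n+1))⁻¹ * K⁻¹) := h3
        _ = (ε (n+1))⁻¹ := by field_simp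
    nlinarith [hsucc]
  have hiter : ∀ d : ℕ, a k ≤ a (k + d) * (1 - K⁻¹) ^ d := by
    intro d
    induction d with
    | zero => simp
    | succ d ih =>
      calc a k ≤ a (k+d) * (1-K⁻¹)^d := ih
        _ ≤ (a (k+d+1) * (1-K⁻¹)) * (1-K⁻¹)^d :=
            mul_le_mul_of_nonneg_right (hstep (k+d)) (pow_nonneg hr0.le d)
        _ = a (k+d+1) * (1-K⁻¹)^(d+1) := by ring
  obtain ⟨d, rfl⟩ : ∃ d, m = k + d := ⟨m - k, (Nat.add_sub_cancel' hkm).symm⟩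
  have hak : (ε k)⁻¹ ≤ a k := by
    apply Finset.single_le_sum (f := fun j => (ε j)⁻¹)
      (fun j _ => (inv_pos.2 (hpos j)).le)
    exact Finset.mem_Icc.2 ⟨hk, le_refl k⟩
  have hd : k + d - k = d := by omega
  rw [hd]
  calc ε (k+d) / ε k = ε (k+d) * (ε k)⁻¹ := div_eq_mul_inv _ _
    _ ≤ ε (k+d) * a k := mul_le_mul_of_nonneg_left hak (hpos _).le
    _ ≤ ε (k+d) * (a (k+d) * (1-K⁻¹)^d) :=
        mul_le_mul_of_nonneg_left (hiter d) (hpos _).le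
    _ = (ε (k+d) * a (k+d)) * (1-K⁻¹)^d := by ring
    _ ≤ K * (1-K⁻¹)^d :=
        mul_le_mul_of_nonneg_right (hεa _ (le_trans hk (Nat.le_add_right k d)))
          (pow_nonneg hr0.le d)
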